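/- Let ℓ ≥ 3 be an odd integer and let v ∈ C be a primitive ℓ-th root of unity. Then the function q ↦ (−1)^ℓ · ( [ℓ]_q!! · [ℓ−2]_q!! )² / ( [2ℓ−1]_q!! · [2ℓ]_q!! ), defined for complex q near v with q ≠ v (the denominator is nonvanishing on some punctured neighborhood of v), tends to −1/2 as q → v with q ≠ v. (This evaluation occurs in the proof of Proposition 7.5 of the paper.) -/

import Mathlib

open Filter Topology

/-- The quantum integer `[m]_q = (q^m - q^{-m})/(q - q^{-1})`. -/
noncomputable def qInt (q : ℂ) (m : ℕ) : ℂ := (q ^ m - q⁻¹ ^ m) / (q - q⁻¹)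

/-- The quantum double factorial `[m]_q!! = ∏_{r=0}^{⌈m/2⌉-1} [m-2r]_q`. -/
noncomputable def qDFact (q : ℂ) (m : ℕ) : ℂ :=
  ∏ r ∈ Finset.range ((m + 1) / 2), qInt q (m - 2 * r)

/-- Auxiliary: the numerator `q^m - q⁻¹^m` of the quantum integer. -/
noncomputable def Pq (q : ℂ) (m : ℕ) : ℂ := q ^ m - q⁻¹ ^ m

lemma qDFact_eq_prod (q : ℂ) (m : ℕ) :
    qDFact q m = (∏ r ∈ Finset.range ((m + 1) / 2), Pq q (m - 2 * r)) /
      (q - q⁻¹) ^ ((m + 1) / 2) := by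
  simp only [qDFact, qInt, Pq]
  rw [Finset.prod_div_distrib, Finset.prod_const, Finset.card_range]

/-- Symmetry of `Pq` at roots of unity. -/
lemma Pq_rel {w : ℂ} {n a b : ℕ} (h1 : w ^ n = 1) (hab : a + b = n) :
    Pq w a = -Pq w b := by
  have hprod : w ^ a * w ^ b = 1 := by rw [← pow_add, hab, h1]
  have h2 : (w ^ a)⁻¹ = w ^ b := inv_eq_of_mul_eq_one_right hprod
  have h3 : (w ^ b)⁻¹ = w ^ a := inv_eq_of_mul_eq_one_left hprod
  simp only [Pq, inv_pow, h2, h3]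
  ring

lemma structL1 (q : ℂ) (k : ℕ) :
    qDFact q (2 * k + 1) =
      (Pq q (2 * k + 1) * ∏ r ∈ Finset.range k, Pq q (2 * k - 1 - 2 * r)) /
        (q - q⁻¹) ^ (k + 1) := by
  rw [qDFact_eq_prod]
  have h2 : (2 * k + 1 + 1) / 2 = k + 1 := by omega
  rw [h2, Finset.prod_range_succ' (fun r => Pq q (2 * k + 1 - 2 * r)) k]
  rw [Finset.prod_congr rfl
    (fun r hr => by congr 1; omega :
      ∀ r ∈ Finset.range k, Pq q (2 * k + 1 - 2 * (r + 1)) = Pq q (2 * k - 1 - 2 * r))]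
  rw [show 2 * k + 1 - 2 * 0 = 2 * k + 1 from by omega]
  ring

lemma structL2 (q : ℂ) (k : ℕ) (hk : 1 ≤ k) :
    qDFact q (2 * k - 1) =
      (∏ r ∈ Finset.range k, Pq q (2 * k - 1 - 2 * r)) / (q - q⁻¹) ^ k := by
  rw [qDFact_eq_prod]
  have h2 : (2 * k - 1 + 1) / 2 = k := by omega
  rw [h2]

lemma structL3 (q : ℂ) (k : ℕ) :
    qDFact q (4 * k + 1) =
      ((∏ r ∈ Finset.range k, Pq q (4 * k + 1 - 2 * r)) *
        (Pq q (2 * k + 1) * ∏ r ∈ Finset.range k, Pq q (2 * k - 1 - 2 * r))) /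
        ((q - q⁻¹) ^ (k + 1) * (q - q⁻¹) ^ k) := by
  rw [qDFact_eq_prod]
  have h2 : (4 * k + 1 + 1) / 2 = k + (k + 1) := by omega
  rw [h2, Finset.prod_range_add (fun r => Pq q (4 * k + 1 - 2 * r)) k (k + 1)]
  rw [Finset.prod_range_succ' (fun r => Pq q (4 * k + 1 - 2 * (k + r))) k]
  rw [Finset.prod_congr rfl
    (fun r hr => by congr 1; omega :
      ∀ r ∈ Finset.range k,
        Pq q (4 * k + 1 - 2 * (k + (r + 1))) = Pq q (2 * k - 1 - 2 * r))]
  rw [show 4 * k + 1 - 2 * (k + 0) = 2 * k + 1 from by omega]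
  rw [show k + (k + 1) = (k + 1) + k from by omega, pow_add]
  ring

lemma structL4 (q : ℂ) (k : ℕ) :
    qDFact q (4 * k + 2) =
      (Pq q (2 * k + 1) * (q ^ (2 * k + 1) + q⁻¹ ^ (2 * k + 1)) *
        ((∏ r ∈ Finset.range k, Pq q (4 * k - 2 * r)) *
          ∏ r ∈ Finset.range k, Pq q (2 * k - 2 * r))) /
        ((q - q⁻¹) ^ (k + 1) * (q - q⁻¹) ^ k) := by
  rw [qDFact_eq_prod]
  have h2 : (4 * k + 2 + 1) / 2 = 2 * k + 1 := by omega
  rw [h2, Finset.prod_range_succ' (fun r => Pq q (4 * k + 2 - 2 * r)) (2 * k)]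
  rw [Finset.prod_congr rfl
    (fun r hr => by congr 1; omega :
      ∀ r ∈ Finset.range (2 * k),
        Pq q (4 * k + 2 - 2 * (r + 1)) = Pq q (4 * k - 2 * r))]
  have hsplit : (∏ r ∈ Finset.range (2 * k), Pq q (4 * k - 2 * r))
      = (∏ r ∈ Finset.range k, Pq q (4 * k - 2 * r)) *
        ∏ r ∈ Finset.range k, Pq q (4 * k - 2 * (k + r)) := by
    rw [show (2 : ℕ) * k = k + k from by omega,
      Finset.prod_range_add (fun r => Pq q (4 * k - 2 * r)) k k]
  rw [hsplit]
  rw [Finset.prod_congr rfl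
    (fun r hr => by congr 1; omega :
      ∀ r ∈ Finset.range k, Pq q (4 * k - 2 * (k + r)) = Pq q (2 * k - 2 * r))]
  rw [show 4 * k + 2 - 2 * 0 = (2 * k + 1) + (2 * k + 1) from by omega]
  have hP2l : Pq q ((2 * k + 1) + (2 * k + 1))
      = Pq q (2 * k + 1) * (q ^ (2 * k + 1) + q⁻¹ ^ (2 * k + 1)) := by
    simp only [Pq, pow_add]
    ring
  rw [hP2l, ← pow_add, show (k + 1) + k = 2 * k + 1 from by omega]
  ring

set_option maxHeartbeats 1600000 in
lemma final_alg (c pA pU pC pE pP s t1 t2 : ℂ) (hA : pA ≠ 0) (hU : pU ≠ 0) (hC : pC ≠ 0)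
    (hE : pE ≠ 0) (hP : pP ≠ 0) (hs : s ≠ 0) (h1 : t1 ≠ 0) (h2 : t2 ≠ 0) :
    c * pA ^ 3 / (s * pU * pC * pE) =
      c * (pP * pA / t1 * (pA / t2)) ^ 2 /
        (pU * (pP * pA) / (t1 * t2) * (pP * s * (pC * pE) / (t1 * t2))) := by
  rw [div_mul_div_comm (pP * pA) t1 pA t2,
    div_mul_div_comm (pU * (pP * pA)) (t1 * t2) (pP * s * (pC * pE)) (t1 * t2),
    div_pow, ← mul_div_assoc, ← pow_two (t1 * t2),
    div_div_div_cancel_right₀ (pow_ne_zero 2 (mul_ne_zero h1 h2)),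
    div_eq_div_iff (by simp [hs, hU, hC, hE]) (by simp [hs, hU, hC, hE, hP, hA])]
  ring

theorem qDFact_ratio_tendsto (ℓ : ℕ) (hodd : Odd ℓ) (hl : 3 ≤ ℓ) (v : ℂ)
    (hv : IsPrimitiveRoot v ℓ) :
    Tendsto
      (fun q : ℂ =>
        ((-1 : ℂ) ^ ℓ * (qDFact q ℓ * qDFact q (ℓ - 2)) ^ 2) /
          (qDFact q (2 * ℓ - 1) * qDFact q (2 * ℓ)))
      (𝓝[≠] v) (𝓝 (-1 / 2)) := by
  obtain ⟨k, hk⟩ := hodd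
  subst hk
  have hk1 : 1 ≤ k := by omega
  -- normalize the indices appearing in the goal
  have e2 : 2 * (2 * k + 1) = 4 * k + 2 := by omega
  have e3 : 4 * k + 2 - 1 = 4 * k + 1 := by omega
  have e1 : 2 * k + 1 - 2 = 2 * k - 1 := by omega
  simp only [e1, e2, e3]
  -- basic facts about v
  have hv0 : v ≠ 0 := hv.ne_zero (by omega)
  have hv1 : v ^ (2 * k + 1) = 1 := hv.pow_eq_one
  have hv2 : v ^ (2 * (2 * k + 1)) = 1 := by rw [mul_comm, pow_mul, hv1, one_pow]
  -- nonvanishing of Pq v m for 1 ≤ m < 2k+1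
  have hPm : ∀ m : ℕ, 1 ≤ m → m < 2 * k + 1 → Pq v m ≠ 0 := by
    intro m h1 h2 h0
    simp only [Pq] at h0
    have hqq : v ^ m = v⁻¹ ^ m := sub_eq_zero.mp h0
    have hne : v ^ m ≠ 0 := pow_ne_zero _ hv0
    have h2m : v ^ (2 * m) = 1 := by
      have h' : v ^ m * v ^ m = v ^ m * v⁻¹ ^ m := by rw [← hqq]
      rw [inv_pow, mul_inv_cancel₀ hne] at h'
      rw [two_mul, pow_add, h']
    have hdvd : (2 * k + 1) ∣ 2 * m := (hv.pow_eq_one_iff_dvd _).mp h2m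
    have hcop : Nat.Coprime (2 * k + 1) 2 := Odd.coprime_two_right ⟨k, rfl⟩
    have hdm : (2 * k + 1) ∣ m := (hcop.dvd_mul_left).mp hdvd
    have := Nat.le_of_dvd (by omega) hdm
    omega
  -- value computations at v
  have hbase : (∏ r ∈ Finset.range k, Pq v (2 * k - 1 - 2 * r))
      = ∏ r ∈ Finset.range k, Pq v (2 * r + 1) := by
    rw [show (∏ r ∈ Finset.range k, Pq v (2 * k - 1 - 2 * r))
        = ∏ r ∈ Finset.range k, Pq v (2 * (k - 1 - r) + 1) from
      Finset.prod_congr rfl fun r hr => by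
        have := Finset.mem_range.mp hr; congr 1; omega]
    exact Finset.prod_range_reflect (fun j => Pq v (2 * j + 1)) k
  have prod_neg : ∀ F : ℕ → ℂ, (∏ r ∈ Finset.range k, -F r)
      = (-1) ^ k * ∏ r ∈ Finset.range k, F r := by
    intro F
    calc (∏ r ∈ Finset.range k, -F r) = ∏ r ∈ Finset.range k, ((-1 : ℂ) * F r) :=
          Finset.prod_congr rfl fun r _ => by ring
      _ = (-1) ^ k * ∏ r ∈ Finset.range k, F r := by
          rw [Finset.prod_mul_distrib, Finset.prod_const, Finset.card_range]
  have hUv : (∏ r ∈ Finset.range k, Pq v (4 * k + 1 - 2 * r))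
      = (-1) ^ k * ∏ r ∈ Finset.range k, Pq v (2 * k - 1 - 2 * r) := by
    rw [Finset.prod_congr rfl
      (fun r hr => Pq_rel hv2 (by have := Finset.mem_range.mp hr; omega) :
        ∀ r ∈ Finset.range k, Pq v (4 * k + 1 - 2 * r) = -Pq v (2 * r + 1))]
    rw [prod_neg, hbase]
  have hEv : (∏ r ∈ Finset.range k, Pq v (2 * k - 2 * r))
      = (-1) ^ k * ∏ r ∈ Finset.range k, Pq v (2 * k - 1 - 2 * r) := by
    rw [Finset.prod_congr rfl
      (fun r hr => Pq_rel hv1 (by have := Finset.mem_range.mp hr; omega) :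
        ∀ r ∈ Finset.range k, Pq v (2 * k - 2 * r) = -Pq v (2 * r + 1))]
    rw [prod_neg, hbase]
  have hCv : (∏ r ∈ Finset.range k, Pq v (4 * k - 2 * r))
      = ∏ r ∈ Finset.range k, Pq v (2 * k - 1 - 2 * r) := by
    refine Finset.prod_congr rfl fun r hr => ?_
    have hr' : r < k := Finset.mem_range.mp hr
    rw [Pq_rel hv2 (show (4 * k - 2 * r) + (2 * r + 2) = 2 * (2 * k + 1) from by omega),
      Pq_rel hv1 (show (2 * r + 2) + (2 * k - 1 - 2 * r) = 2 * k + 1 from by omega),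
      neg_neg]
  have hAne : (∏ r ∈ Finset.range k, Pq v (2 * k - 1 - 2 * r)) ≠ 0 := by
    refine Finset.prod_ne_zero_iff.mpr fun r hr => ?_
    have hr' : r < k := Finset.mem_range.mp hr
    exact hPm _ (by omega) (by omega)
  have hSv : v ^ (2 * k + 1) + v⁻¹ ^ (2 * k + 1) = 2 := by
    rw [hv1, inv_pow, hv1]
    norm_num
  have htv : v - v⁻¹ ≠ 0 := by
    have := hPm 1 le_rfl (by omega)
    simpa [Pq] using this
  -- continuity at v
  have hcPq : ∀ m : ℕ, ContinuousAt (fun q : ℂ => Pq q m) v := by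
    intro m
    exact (continuousAt_id.pow m).sub ((continuousAt_inv₀ hv0).pow m)
  have hcprod : ∀ F : ℕ → ℕ, ∀ n : ℕ,
      ContinuousAt (fun q : ℂ => ∏ r ∈ Finset.range n, Pq q (F r)) v := by
    intro F n
    induction n with
    | zero => simpa using continuousAt_const
    | succ n ih =>
      simp only [Finset.prod_range_succ]
      exact ih.mul (hcPq _)
  have hcS : ContinuousAt (fun q : ℂ => q ^ (2 * k + 1) + q⁻¹ ^ (2 * k + 1)) v :=
    (continuousAt_id.pow _).add ((continuousAt_inv₀ hv0).pow _)
  -- the limit function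
  set g : ℂ → ℂ := fun q =>
    ((-1 : ℂ) ^ (2 * k + 1) * (∏ r ∈ Finset.range k, Pq q (2 * k - 1 - 2 * r)) ^ 3) /
      ((q ^ (2 * k + 1) + q⁻¹ ^ (2 * k + 1)) *
        (∏ r ∈ Finset.range k, Pq q (4 * k + 1 - 2 * r)) *
        (∏ r ∈ Finset.range k, Pq q (4 * k - 2 * r)) *
        (∏ r ∈ Finset.range k, Pq q (2 * k - 2 * r))) with hg
  have hone : (-1 : ℂ) ^ k * (-1 : ℂ) ^ k = 1 := by
    rw [← pow_add]
    exact Even.neg_one_pow ⟨k, rfl⟩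
  have hDv : (v ^ (2 * k + 1) + v⁻¹ ^ (2 * k + 1)) *
        (∏ r ∈ Finset.range k, Pq v (4 * k + 1 - 2 * r)) *
        (∏ r ∈ Finset.range k, Pq v (4 * k - 2 * r)) *
        (∏ r ∈ Finset.range k, Pq v (2 * k - 2 * r))
      = 2 * (∏ r ∈ Finset.range k, Pq v (2 * k - 1 - 2 * r)) ^ 3 := by
    rw [hSv, hUv, hCv, hEv]
    linear_combination (2 * (∏ r ∈ Finset.range k, Pq v (2 * k - 1 - 2 * r)) ^ 3) * hone
  have hDne : (v ^ (2 * k + 1) + v⁻¹ ^ (2 * k + 1)) *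
        (∏ r ∈ Finset.range k, Pq v (4 * k + 1 - 2 * r)) *
        (∏ r ∈ Finset.range k, Pq v (4 * k - 2 * r)) *
        (∏ r ∈ Finset.range k, Pq v (2 * k - 2 * r)) ≠ 0 := by
    rw [hDv]
    exact mul_ne_zero two_ne_zero (pow_ne_zero _ hAne)
  have hneg1 : (-1 : ℂ) ^ (2 * k + 1) = -1 := Odd.neg_one_pow ⟨k, rfl⟩
  have hgv : g v = -1 / 2 := by
    rw [hg]
    simp only
    rw [hDv, hneg1]
    rw [div_eq_div_iff (mul_ne_zero two_ne_zero (pow_ne_zero _ hAne)) two_ne_zero]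
    ring
  have hc : ContinuousAt g v := by
    rw [hg]
    exact (continuousAt_const.mul ((hcprod (fun r => 2 * k - 1 - 2 * r) k).pow 3)).div
      (((hcS.mul (hcprod (fun r => 4 * k + 1 - 2 * r) k)).mul
        (hcprod (fun r => 4 * k - 2 * r) k)).mul (hcprod (fun r => 2 * k - 2 * r) k)) hDne
  have hgt : Tendsto g (𝓝[≠] v) (𝓝 (-1 / 2)) := by
    have h' : Tendsto g (𝓝[≠] v) (𝓝 (g v)) := hc.tendsto.mono_left nhdsWithin_le_nhds
    rwa [hgv] at h'
  refine Tendsto.congr' ?_ hgt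
  -- eventual facts
  have hev0 : ∀ᶠ q in 𝓝[≠] v, q ≠ (0 : ℂ) :=
    (eventually_ne_nhds hv0).filter_mono nhdsWithin_le_nhds
  have hevt : ∀ᶠ q in 𝓝[≠] v, q - q⁻¹ ≠ 0 :=
    (((continuousAt_id.sub (continuousAt_inv₀ hv0)).eventually_ne htv).filter_mono
      nhdsWithin_le_nhds)
  have hevA : ∀ᶠ q in 𝓝[≠] v, (∏ r ∈ Finset.range k, Pq q (2 * k - 1 - 2 * r)) ≠ 0 :=
    (((hcprod (fun r => 2 * k - 1 - 2 * r) k).eventually_ne hAne).filter_mono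
      nhdsWithin_le_nhds)
  have hevU : ∀ᶠ q in 𝓝[≠] v, (∏ r ∈ Finset.range k, Pq q (4 * k + 1 - 2 * r)) ≠ 0 :=
    (((hcprod (fun r => 4 * k + 1 - 2 * r) k).eventually_ne
      (by rw [hUv]; exact mul_ne_zero (pow_ne_zero _ (by norm_num)) hAne)).filter_mono
      nhdsWithin_le_nhds)
  have hevC : ∀ᶠ q in 𝓝[≠] v, (∏ r ∈ Finset.range k, Pq q (4 * k - 2 * r)) ≠ 0 :=
    (((hcprod (fun r => 4 * k - 2 * r) k).eventually_ne
      (by rw [hCv]; exact hAne)).filter_mono nhdsWithin_le_nhds)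
  have hevE : ∀ᶠ q in 𝓝[≠] v, (∏ r ∈ Finset.range k, Pq q (2 * k - 2 * r)) ≠ 0 :=
    (((hcprod (fun r => 2 * k - 2 * r) k).eventually_ne
      (by rw [hEv]; exact mul_ne_zero (pow_ne_zero _ (by norm_num)) hAne)).filter_mono
      nhdsWithin_le_nhds)
  have hevS : ∀ᶠ q in 𝓝[≠] v, q ^ (2 * k + 1) + q⁻¹ ^ (2 * k + 1) ≠ 0 :=
    ((hcS.eventually_ne (by rw [hSv]; exact two_ne_zero)).filter_mono nhdsWithin_le_nhds)
  -- eventually Pq q (2k+1) ≠ 0 on the punctured neighborhood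
  have hevP : ∀ᶠ q in 𝓝[≠] v, Pq q (2 * k + 1) ≠ 0 := by
    set R : Set ℂ := ((Polynomial.nthRootsFinset (2 * (2 * k + 1)) (1 : ℂ) : Finset ℂ) : Set ℂ)
      with hR
    have hfin : R.Finite := Finset.finite_toSet _
    have hopen : IsOpen (R \ {v})ᶜ := ((hfin.subset Set.diff_subset).isClosed).isOpen_compl
    have hvmem : v ∈ (R \ {v})ᶜ := by simp
    have hnb : ∀ᶠ q in 𝓝[≠] v, q ∈ (R \ {v})ᶜ :=
      mem_nhdsWithin_of_mem_nhds (hopen.mem_nhds hvmem)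
    have hne : ∀ᶠ q in 𝓝[≠] v, q ≠ v := eventually_mem_nhdsWithin
    filter_upwards [hnb, hne, hev0] with q hq hqv hq0 h0
    simp only [Pq] at h0
    have hqq : q ^ (2 * k + 1) = q⁻¹ ^ (2 * k + 1) := sub_eq_zero.mp h0
    have hne' : q ^ (2 * k + 1) ≠ 0 := pow_ne_zero _ hq0
    have hroot : q ^ (2 * (2 * k + 1)) = 1 := by
      have h' : q ^ (2 * k + 1) * q ^ (2 * k + 1)
          = q ^ (2 * k + 1) * q⁻¹ ^ (2 * k + 1) := by rw [← hqq]
      rw [inv_pow, mul_inv_cancel₀ hne'] at h'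
      rw [two_mul, pow_add, h']
    have hmem : q ∈ R := by
      rw [hR]
      simp only [Finset.mem_coe]
      exact (Polynomial.mem_nthRootsFinset (by omega) (1 : ℂ)).mpr hroot
    exact hq (Set.mem_diff_of_mem hmem (by simpa using hqv))
  -- pointwise identity
  filter_upwards [hev0, hevt, hevA, hevU, hevC, hevE, hevS, hevP] with
    q hq0 hqt hqA hqU hqC hqE hqS hqP
  rw [hg]
  simp only
  rw [structL1 q k, structL2 q k hk1, structL3 q k, structL4 q k]
  generalize (∏ r ∈ Finset.range k, Pq q (2 * k - 1 - 2 * r)) = pA at hqA ⊢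
  generalize (∏ r ∈ Finset.range k, Pq q (4 * k + 1 - 2 * r)) = pU at hqU ⊢
  generalize (∏ r ∈ Finset.range k, Pq q (4 * k - 2 * r)) = pC at hqC ⊢
  generalize (∏ r ∈ Finset.range k, Pq q (2 * k - 2 * r)) = pE at hqE ⊢
  generalize Pq q (2 * k + 1) = pP at hqP ⊢
  generalize (q ^ (2 * k + 1) + q⁻¹ ^ (2 * k + 1)) = s at hqS ⊢
  have ht1 : (q - q⁻¹) ^ (k + 1) ≠ 0 := pow_ne_zero _ hqt
  have ht2 : (q - q⁻¹) ^ k ≠ 0 := pow_ne_zero _ hqt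
  generalize ((q : ℂ) - q⁻¹) ^ (k + 1) = t1 at ht1 ⊢
  generalize ((q : ℂ) - q⁻¹) ^ k = t2 at ht2 ⊢
  exact final_alg _ pA pU pC pE pP s t1 t2 hqA hqU hqC hqE hqP hqS ht1 ht2
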